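/- Given angles φ = (φ₁,…,φₘ) ∈ (0,π)ᵐ and λ ∈ ℝ, let L₀ be the Grim Reaper cylinder F₀(x₁,…,xₘ) = (x₁,…,x_{m-1}, -log cos(xₘ) - i(xₘ - π/2)) and let L_φ^λ = P_{(φ,λ)}(L₀) where P_{(φ,λ)}(z₁,…,zₘ) = (e^{iφ₁}z₁,…,e^{iφ_{m-1}}z_{m-1}, zₘ + λ + iφₘ). Then L₀ and L_φ^λ intersect in exactly one point p, and p has the form (0,…,0,q) with q ∈ ℂ. -/

import Mathlib

/-- The Grim Reaper cylinder `L₀ = {(x₁,…,x_{m-1}, γ₀(s))}` in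
`ℂᵐ = ℂ^{m-1} × ℂ`, where `γ₀(s) = -log cos s - i(s - π/2)`. -/
def grimCyl (k : ℕ) : Set ((Fin k → ℂ) × ℂ) :=
  {p | ∃ (x : Fin k → ℝ) (s : ℝ), s ∈ Set.Ioo (-(Real.pi / 2)) (Real.pi / 2) ∧
    p = (fun j => (x j : ℂ),
      -(Real.log (Real.cos s) : ℂ) - Complex.I * ((s : ℂ) - (Real.pi : ℂ) / 2))}

/-- The rotated and translated Grim Reaper cylinder
`L_φ^λ = P_{(φ,λ)}(L₀)`, `P_{(φ,λ)}(z) = (e^{iφ₁}z₁,…,e^{iφ_{m-1}}z_{m-1}, zₘ + λ + iφₘ)`. -/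
def grimCylRot (k : ℕ) (φ : Fin k → ℝ) (φm lam : ℝ) : Set ((Fin k → ℂ) × ℂ) :=
  {p | ∃ (x : Fin k → ℝ) (s : ℝ), s ∈ Set.Ioo (-(Real.pi / 2)) (Real.pi / 2) ∧
    p = (fun j => Complex.exp (Complex.I * (φ j : ℂ)) * (x j : ℂ),
      -(Real.log (Real.cos s) : ℂ) - Complex.I * ((s : ℂ) - (Real.pi : ℂ) / 2)
        + (lam : ℂ) + Complex.I * (φm : ℂ))}

open Real Set Filter Topology

/-- The transcendental equation `log cos (s - φₘ) - log cos s = λ` has a unique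
solution on the interval where both cosines are positive. -/
lemma grim_key (φm lam : ℝ) (hφm : φm ∈ Set.Ioo 0 Real.pi) :
    ∃! s : ℝ, s ∈ Set.Ioo (φm - Real.pi/2) (Real.pi/2) ∧
      Real.log (Real.cos (s - φm)) - Real.log (Real.cos s) = lam := by
  obtain ⟨h0, hπ⟩ := hφm
  have hab : φm - π/2 < π/2 := by linarith
  set f : ℝ → ℝ := fun s => Real.log (Real.cos (s - φm)) - Real.log (Real.cos s) with hf
  have hcos : ∀ s ∈ Ioo (φm - π/2) (π/2), 0 < Real.cos s ∧ 0 < Real.cos (s - φm) := by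
    rintro s ⟨hs1, hs2⟩
    constructor
    · exact Real.cos_pos_of_mem_Ioo ⟨by linarith, hs2⟩
    · exact Real.cos_pos_of_mem_Ioo ⟨by linarith, by linarith⟩
  have hderiv : ∀ s ∈ Ioo (φm - π/2) (π/2),
      HasDerivAt f (Real.tan s - Real.tan (s - φm)) s := by
    intro s hs
    obtain ⟨h1, h2⟩ := hcos s hs
    have d1 : HasDerivAt (fun s => Real.log (Real.cos (s - φm))) (-Real.tan (s - φm)) s := by
      have := ((Real.hasDerivAt_cos (s - φm)).comp s
        ((hasDerivAt_id s).sub_const φm)).log (show (Real.cos ∘ fun x => id x - φm) s ≠ 0 from h2.ne')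
      simpa [Real.tan_eq_sin_div_cos, neg_div] using this
    have d2 : HasDerivAt (fun s => Real.log (Real.cos s)) (-Real.tan s) s := by
      have := (Real.hasDerivAt_cos s).log h1.ne'
      simpa [Real.tan_eq_sin_div_cos, neg_div] using this
    have : HasDerivAt f (-Real.tan (s - φm) - -Real.tan s) s := d1.sub d2
    convert this using 1
    ring
  have hmono : StrictMonoOn f (Ioo (φm - π/2) (π/2)) := by
    apply strictMonoOn_of_deriv_pos (convex_Ioo _ _)
    · exact fun s hs => ((hderiv s hs).continuousAt).continuousWithinAt
    · intro s hs
      rw [interior_Ioo] at hs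
      rw [(hderiv s hs).deriv]
      have : Real.tan (s - φm) < Real.tan s := by
        apply Real.strictMonoOn_tan ⟨by linarith [hs.1], by linarith [hs.2]⟩
          ⟨by linarith [hs.1], hs.2⟩
        linarith
      linarith
  have hcont : ContinuousOn f (Ioo (φm - π/2) (π/2)) :=
    fun s hs => ((hderiv s hs).continuousAt).continuousWithinAt
  have hlogbot : Tendsto Real.log (𝓝[>] (0:ℝ)) atBot :=
    Real.tendsto_log_nhdsGT_zero
  -- at right endpoint f → atTop
  have htop : Tendsto f (𝓝[Ioo (φm - π/2) (π/2)] (π/2)) atTop := by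
    have t1 : Tendsto (fun s => Real.log (Real.cos (s - φm)))
        (𝓝[Ioo (φm - π/2) (π/2)] (π/2)) (𝓝 (Real.log (Real.cos (π/2 - φm)))) :=
      (((Real.continuous_cos.comp (continuous_id.sub continuous_const)).continuousAt).log
        (by
          have : 0 < Real.cos (π/2 - φm) :=
            Real.cos_pos_of_mem_Ioo ⟨by linarith, by linarith⟩
          exact this.ne')).continuousWithinAt.tendsto
    have t2 : Tendsto (fun s => Real.log (Real.cos s))
        (𝓝[Ioo (φm - π/2) (π/2)] (π/2)) atBot := by
      apply hlogbot.comp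
      rw [tendsto_nhdsWithin_iff]
      constructor
      · apply Tendsto.mono_left _ nhdsWithin_le_nhds
        have := Real.continuous_cos.continuousAt (x := π/2)
        simpa using this.tendsto
      · exact eventually_mem_nhdsWithin.mono fun s hs => (hcos s hs).1
    have t2' : Tendsto (fun s => -Real.log (Real.cos s))
        (𝓝[Ioo (φm - π/2) (π/2)] (π/2)) atTop := tendsto_neg_atBot_atTop.comp t2
    simpa [hf, sub_eq_add_neg] using t1.add_atTop t2'
  -- at left endpoint f → atBot
  have hbot : Tendsto f (𝓝[Ioo (φm - π/2) (π/2)] (φm - π/2)) atBot := by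
    have t1 : Tendsto (fun s => -Real.log (Real.cos s))
        (𝓝[Ioo (φm - π/2) (π/2)] (φm - π/2)) (𝓝 (-Real.log (Real.cos (φm - π/2)))) := by
      apply Tendsto.neg
      apply ((Real.continuous_cos.continuousAt).log _).continuousWithinAt.tendsto
      have : 0 < Real.cos (φm - π/2) := Real.cos_pos_of_mem_Ioo ⟨by linarith, by linarith⟩
      exact this.ne'
    have t2 : Tendsto (fun s => Real.log (Real.cos (s - φm)))
        (𝓝[Ioo (φm - π/2) (π/2)] (φm - π/2)) atBot := by
      apply hlogbot.comp
      rw [tendsto_nhdsWithin_iff]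
      constructor
      · apply Tendsto.mono_left _ nhdsWithin_le_nhds
        have : Tendsto (fun s : ℝ => Real.cos (s - φm)) (𝓝 (φm - π/2))
            (𝓝 (Real.cos ((φm - π/2) - φm))) :=
          (Real.continuous_cos.comp (continuous_id.sub continuous_const)).tendsto _
        simpa [show φm - π/2 - φm = -(π/2) by ring] using this
      · exact eventually_mem_nhdsWithin.mono fun s hs => (hcos s hs).2
    simpa [hf, sub_eq_add_neg] using t2.atBot_add t1
  -- pick a' with f a' < lam and b' with lam < f b'
  have hne1 : (𝓝[Ioo (φm - π/2) (π/2)] (φm - π/2)).NeBot := by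
    rw [nhdsWithin_Ioo_eq_nhdsGT hab]
    infer_instance
  have hne2 : (𝓝[Ioo (φm - π/2) (π/2)] (π/2)).NeBot := by
    rw [nhdsWithin_Ioo_eq_nhdsLT hab]
    infer_instance
  obtain ⟨a', ha'1, ha'2⟩ :=
    ((hbot.eventually (eventually_lt_atBot lam)).and eventually_mem_nhdsWithin).exists
  obtain ⟨b', hb'1, hb'2⟩ :=
    ((htop.eventually (eventually_gt_atTop lam)).and eventually_mem_nhdsWithin).exists
  have hab' : a' < b' := by
    by_contra h
    push_neg at h
    rcases eq_or_lt_of_le h with h | h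
    · subst h; linarith
    · linarith [hmono hb'2 ha'2 h]
  have hsub : Icc a' b' ⊆ Ioo (φm - π/2) (π/2) :=
    Icc_subset_Ioo ha'2.1 hb'2.2
  obtain ⟨c, hc, hfc⟩ := intermediate_value_Ioo hab'.le (hcont.mono hsub) ⟨ha'1, hb'1⟩
  have hcmem : c ∈ Ioo (φm - π/2) (π/2) := hsub ⟨hc.1.le, hc.2.le⟩
  refine ⟨c, ⟨hcmem, hfc⟩, ?_⟩
  rintro d ⟨hd, hfd⟩
  exact hmono.injOn hd hcmem (hfd.trans hfc.symm)

/-- `L₀` and `L_φ^λ` intersect in exactly one point, and that point has the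
form `(0,…,0,q)`. -/
theorem grimCyl_inter_unique (k : ℕ) (φ : Fin k → ℝ) (φm lam : ℝ)
    (hφ : ∀ j, φ j ∈ Set.Ioo 0 Real.pi) (hφm : φm ∈ Set.Ioo 0 Real.pi) :
    (∃! p, p ∈ grimCyl k ∩ grimCylRot k φ φm lam) ∧
      ∀ p ∈ grimCyl k ∩ grimCylRot k φ φm lam, p.1 = 0 := by
  obtain ⟨c, ⟨hcmem, hfc⟩, huniq⟩ := grim_key φm (-lam) hφm
  obtain ⟨h0, hπ⟩ := hφm
  -- the intersection point
  set p : (Fin k → ℂ) × ℂ :=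
    ((0 : Fin k → ℂ),
      -(Real.log (Real.cos (c - φm)) : ℂ)
        - Complex.I * (((c - φm : ℝ) : ℂ) - (Real.pi : ℂ) / 2)) with hp
  -- characterization of points of the intersection
  have hchar : ∀ q ∈ grimCyl k ∩ grimCylRot k φ φm lam, q = p := by
    rintro q ⟨⟨x, s₀, hs₀, hq1⟩, ⟨y, s₁, hs₁, hq2⟩⟩
    have hfst := congrArg Prod.fst hq1
    have hfst' := congrArg Prod.fst hq2
    have hsnd := (congrArg Prod.snd hq1).symm.trans (congrArg Prod.snd hq2)
    simp only at hfst hfst' hsnd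
    -- first coordinates vanish
    have hx0 : ∀ j, (x j : ℂ) = 0 := by
      intro j
      have h := (congrFun hfst j).symm.trans (congrFun hfst' j)
      have him := congrArg Complex.im h
      simp [mul_comm Complex.I ((φ j : ℝ):ℂ), Complex.exp_mul_I,
        Complex.sin_ofReal_re] at him
      have hs : Real.sin (φ j) ≠ 0 :=
        (Real.sin_pos_of_pos_of_lt_pi (hφ j).1 (hφ j).2).ne'
      have hy : y j = 0 := by
        rcases him with h' | h'
        · exact absurd h' hs
        · exact h'
      have := congrArg Complex.re h
      simp [hy] at this
      exact_mod_cast Complex.ofReal_eq_zero.mpr this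
    -- the second coordinate equation
    have hre := congrArg Complex.re hsnd
    have him := congrArg Complex.im hsnd
    simp at hre him
    have hs01 : s₀ = s₁ - φm := by linarith
    have heq : Real.log (Real.cos (s₁ - φm)) - Real.log (Real.cos s₁) = -lam := by
      rw [← hs01]; linarith
    have hs₁mem : s₁ ∈ Set.Ioo (φm - π/2) (π/2) := by
      constructor
      · have := hs₀.1; rw [hs01] at this; linarith
      · exact hs₁.2
    have hs₁c : s₁ = c := huniq s₁ ⟨hs₁mem, heq⟩
    -- conclude q = p
    have hq1' : q.1 = (0 : Fin k → ℂ) := by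
      have := congrArg Prod.fst hq1
      simp only at this
      rw [this]
      funext j
      exact hx0 j
    have hq2' : q.2 = p.2 := by
      have := congrArg Prod.snd hq1
      simp only at this
      rw [this, hp]
      simp only
      rw [hs01, hs₁c]
    exact Prod.ext hq1' hq2'
  -- p belongs to both cylinders
  have hpCyl : p ∈ grimCyl k := by
    refine ⟨0, c - φm, ⟨?_, ?_⟩, ?_⟩
    · have := hcmem.1; linarith
    · have := hcmem.2; linarith
    · rw [hp]
      refine Prod.ext ?_ rfl
      funext j
      simp
  have hpRot : p ∈ grimCylRot k φ φm lam := by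
    refine ⟨0, c, ⟨?_, ?_⟩, ?_⟩
    · have := hcmem.1; linarith
    · exact hcmem.2
    · refine Prod.ext ?_ ?_
      · funext j; simp [hp]
      · rw [hp]
        simp only
        apply Complex.ext <;> simp <;> ring_nf <;> linarith [hfc]
  refine ⟨⟨p, ⟨hpCyl, hpRot⟩, fun q hq => hchar q hq⟩, fun q hq => ?_⟩
  rw [hchar q hq, hp]
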